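/- Let c > 0 be constant, a ∈ ℝ, r₀ > 0 with Δ(r₀) > 0 where Δ(r) = r² − 2r + a². Let B, f, ρ, u : ℝ → ℝ be differentiable at r₀ with B(r₀) > 0, f(r₀) > 0, ρ(r₀) > 0, 0 < u(r₀) < 1. Define ξ(r) = ρ(r)^{c²}·√(Δ(r)/(B(r)(1−u(r)²))) and Ṁ(r) = ρ(r)·f(r)·√(Δ(r))·u(r)/√(1−u(r)²). If ξ′(r₀) = 0 and Ṁ′(r₀) = 0, then at r = r₀: (u² − c²)·u′ = u(1−u²)·[ c²·(Δ′/(2Δ) + f′/f) + (1/2)·(B′/B − Δ′/Δ) ], where Δ′ = 2r − 2. -/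

import Mathlib

/-- Velocity-gradient equation for stationary isothermal accretion onto a Kerr black hole
with Novikov–Thorne disc height `H = c·f(r)`: if `ξ = ρ^{c²}√(Δ/(B(1−u²)))` and
`Ṁ = ρf√Δ·u/√(1−u²)` are stationary at `r₀`, then
`(u² − c²)·u′ = u(1−u²)·[c²(Δ′/(2Δ) + f′/f) + (1/2)(B′/B − Δ′/Δ)]` at `r₀`. -/
theorem novikov_thorne_isothermal_velocity_gradient (c a r₀ : ℝ) (hc : 0 < c) (hr : 0 < r₀)
    (Δ : ℝ → ℝ) (hΔdef : Δ = fun r => r ^ 2 - 2 * r + a ^ 2) (hΔpos : 0 < Δ r₀)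
    (B f ρ u : ℝ → ℝ)
    (hB : DifferentiableAt ℝ B r₀) (hf : DifferentiableAt ℝ f r₀)
    (hρ : DifferentiableAt ℝ ρ r₀) (hu : DifferentiableAt ℝ u r₀)
    (hB0 : 0 < B r₀) (hf0 : 0 < f r₀) (hρ0 : 0 < ρ r₀) (hu0 : 0 < u r₀) (hu1 : u r₀ < 1)
    (ξ Mdot : ℝ → ℝ)
    (hξ : ξ = fun r => (ρ r) ^ (c ^ 2) * Real.sqrt (Δ r / (B r * (1 - (u r) ^ 2))))
    (hM : Mdot = fun r => ρ r * f r * Real.sqrt (Δ r) * u r / Real.sqrt (1 - (u r) ^ 2))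
    (hξ' : deriv ξ r₀ = 0) (hM' : deriv Mdot r₀ = 0) :
    ((u r₀) ^ 2 - c ^ 2) * deriv u r₀ =
      u r₀ * (1 - (u r₀) ^ 2) *
        (c ^ 2 * ((2 * r₀ - 2) / (2 * Δ r₀) + deriv f r₀ / f r₀) +
          (1 / 2) * (deriv B r₀ / B r₀ - (2 * r₀ - 2) / Δ r₀)) := by
  set U := u r₀ with hUdef
  set U' := deriv u r₀ with hU'def
  set P := ρ r₀ with hPdef
  set P' := deriv ρ r₀ with hP'def
  set F := f r₀ with hFdef
  set F' := deriv f r₀ with hF'def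
  set Bv := B r₀ with hBvdef
  set B' := deriv B r₀ with hB'def
  set D := Δ r₀ with hDdef
  have hW : 0 < 1 - U ^ 2 := by nlinarith
  have hBW : 0 < Bv * (1 - U ^ 2) := mul_pos hB0 hW
  have hΔder : HasDerivAt Δ (2 * r₀ - 2) r₀ := by
    rw [hΔdef]
    have h1 : HasDerivAt (fun r : ℝ => r ^ 2) (2 * r₀) r₀ := by
      simpa using hasDerivAt_pow 2 r₀
    have h2 : HasDerivAt (fun r : ℝ => 2 * r) 2 r₀ := by
      simpa using (hasDerivAt_id r₀).const_mul (2 : ℝ)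
    simpa using (h1.sub h2).add_const (a ^ 2)
  have hud : HasDerivAt u U' r₀ := hu.hasDerivAt
  have hρd : HasDerivAt ρ P' r₀ := hρ.hasDerivAt
  have hfd : HasDerivAt f F' r₀ := hf.hasDerivAt
  have hBd : HasDerivAt B B' r₀ := hB.hasDerivAt
  have hwd : HasDerivAt (fun r => 1 - (u r) ^ 2) (-(2 * U * U')) r₀ := by
    have h := (hud.pow 2).const_sub 1
    simpa using h
  -- ===== equation 1, from ξ' = 0 =====
  set G := ((2 * r₀ - 2) * (Bv * (1 - U ^ 2)) - D * (B' * (1 - U ^ 2) + Bv * (-(2 * U * U')))) /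
        (Bv * (1 - U ^ 2)) ^ 2 with hGdef
  have hgd : HasDerivAt (fun r => Δ r / (B r * (1 - (u r) ^ 2))) G r₀ :=
    hΔder.div (hBd.mul hwd) hBW.ne'
  have hg0 : 0 < D / (Bv * (1 - U ^ 2)) := div_pos hΔpos hBW
  set S := Real.sqrt (D / (Bv * (1 - U ^ 2))) with hSdef
  have hsg : 0 < S := Real.sqrt_pos.mpr hg0
  have hsgsq : S ^ 2 = D / (Bv * (1 - U ^ 2)) := Real.sq_sqrt hg0.le
  have hξd : HasDerivAt ξ (c ^ 2 * P ^ (c ^ 2 - 1) * P' * S + P ^ (c ^ 2) * (G / (2 * S))) r₀ := by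
    rw [hξ]
    have h := (hρd.rpow_const (p := c ^ 2) (Or.inl hρ0.ne')).mul (hgd.sqrt hg0.ne')
    refine h.congr_deriv ?_
    ring
  have hE1 : c ^ 2 * P ^ (c ^ 2 - 1) * P' * S + P ^ (c ^ 2) * (G / (2 * S)) = 0 := by
    rw [← hξd.deriv]; exact hξ'
  have hK : (0:ℝ) < P ^ (c ^ 2) := Real.rpow_pos_of_pos hρ0 _
  rw [Real.rpow_sub_one hρ0.ne'] at hE1
  have h2' : 2 * c ^ 2 * P' * S ^ 2 + G * P = 0 := by
    have h1 : P ≠ 0 := hρ0.ne'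
    have h2 : S ≠ 0 := hsg.ne'
    have h3 : P ^ (c ^ 2) ≠ 0 := hK.ne'
    field_simp at hE1
    refine mul_left_cancel₀ h3 ?_
    linear_combination hE1
  have e1 : c ^ 2 * P' * D * Bv * (1 - U ^ 2) +
      (P / 2) * ((2 * r₀ - 2) * Bv * (1 - U ^ 2) -
        D * (B' * (1 - U ^ 2) - 2 * Bv * U * U')) = 0 := by
    rw [hsgsq, hGdef] at h2'
    field_simp at h2'
    refine mul_left_cancel₀ (show (2 * (Bv * (1 - U ^ 2))) ≠ 0 by positivity) ?_
    linear_combination (Bv * (1 - U ^ 2)) * h2'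
  -- ===== equation 2, from Ṁ' = 0 =====
  have hSD : 0 < Real.sqrt D := Real.sqrt_pos.mpr hΔpos
  have hSDsq : Real.sqrt D ^ 2 = D := Real.sq_sqrt hΔpos.le
  have hT : 0 < Real.sqrt (1 - U ^ 2) := Real.sqrt_pos.mpr hW
  have hTsq : Real.sqrt (1 - U ^ 2) ^ 2 = 1 - U ^ 2 := Real.sq_sqrt hW.le
  set SD := Real.sqrt D with hSDdef
  set T := Real.sqrt (1 - U ^ 2) with hTdef
  have hNd : HasDerivAt (fun r => ρ r * f r * Real.sqrt (Δ r) * u r)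
      (((P' * F + P * F') * SD + P * F * ((2 * r₀ - 2) / (2 * SD))) * U + P * F * SD * U') r₀ :=
    (((hρd.mul hfd).mul (hΔder.sqrt hΔpos.ne')).mul hud)
  have hTd : HasDerivAt (fun r => Real.sqrt (1 - (u r) ^ 2)) (-(2 * U * U') / (2 * T)) r₀ :=
    hwd.sqrt hW.ne'
  have hMd : HasDerivAt Mdot
      (((((P' * F + P * F') * SD + P * F * ((2 * r₀ - 2) / (2 * SD))) * U + P * F * SD * U') * T -
        P * F * SD * U * (-(2 * U * U') / (2 * T))) / T ^ 2) r₀ := by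
    rw [hM]
    exact hNd.div hTd hT.ne'
  have hE2 : ((((P' * F + P * F') * SD + P * F * ((2 * r₀ - 2) / (2 * SD))) * U + P * F * SD * U') * T -
        P * F * SD * U * (-(2 * U * U') / (2 * T))) / T ^ 2 = 0 := by
    rw [← hMd.deriv]; exact hM'
  have e2 : ((P' * F + P * F') * D * U + P * F * (2 * r₀ - 2) * U / 2 + P * F * D * U') * (1 - U ^ 2)
      + P * F * D * U ^ 2 * U' = 0 := by
    have h1 : SD ≠ 0 := hSD.ne'
    have h2 : T ≠ 0 := hT.ne'
    field_simp at hE2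
    linear_combination hE2 -
      (((P' * F + P * F') * U + P * F * U') * T ^ 2 + P * F * U ^ 2 * U') * hSDsq -
      (((P' * F + P * F') * U + P * F * U') * D + P * F * (2 * r₀ - 2) * U / 2) * hTsq
  -- ===== combine =====
  have keyP : ((U ^ 2 - c ^ 2) * U' * (D * F * Bv) -
      U * (1 - U ^ 2) * (c ^ 2 * ((2 * r₀ - 2) * F * Bv / 2 + D * F' * Bv) +
        (D * F * B' - (2 * r₀ - 2) * F * Bv) / 2)) * P = 0 := by
    linear_combination F * U * e1 - c ^ 2 * Bv * e2
  have key : (U ^ 2 - c ^ 2) * U' * (D * F * Bv) =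
      U * (1 - U ^ 2) * (c ^ 2 * ((2 * r₀ - 2) * F * Bv / 2 + D * F' * Bv) +
        (D * F * B' - (2 * r₀ - 2) * F * Bv) / 2) := by
    have := mul_eq_zero.mp keyP
    rcases this with h | h
    · linarith [h]
    · exact absurd h hρ0.ne'
  have hne : D * F * Bv ≠ 0 := by positivity
  have hX : c ^ 2 * ((2 * r₀ - 2) / (2 * D) + F' / F) + (1 / 2) * (B' / Bv - (2 * r₀ - 2) / D) =
      (c ^ 2 * ((2 * r₀ - 2) * F * Bv / 2 + D * F' * Bv) +
        (D * F * B' - (2 * r₀ - 2) * F * Bv) / 2) / (D * F * Bv) := by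
    have hD : D ≠ 0 := hΔpos.ne'
    have hF : F ≠ 0 := hf0.ne'
    have hBv : Bv ≠ 0 := hB0.ne'
    field_simp
  rw [hX, ← mul_div_assoc, eq_div_iff hne]
  linear_combination key
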